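/- Let π be a uniformizer of F and let u ∈ 𝒪^× be a unit whose residue res(u) is not a square in 𝔽. Then for all a, b ∈ F^×, the product {a}·{b} in k^M(F) equals either 0 or {u}·{π}; together with the nonvanishing of {u}·{π}, this shows that the second Milnor K-group k^M_2(F) has exactly two elements. -/

import Mathlib

/-- A nondyadic `p`-adic field packaged as data: a field `F` of characteristic zero,
complete with respect to a surjective discrete valuation `v : Fˣ → ℤ`, with valuation
ring `O`, residue field `K` (finite of odd cardinality in applications), and residue
(quotient) map `res : O →+* K` whose kernel is the maximal ideal `𝔪 = {x : v x ≥ 1}`. -/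
structure PadicData (F K : Type) [Field F] [Field K] where
  v : Fˣ → ℤ
  v_mul : ∀ x y : Fˣ, v (x * y) = v x + v y
  v_surj : Function.Surjective v
  v_ultra : ∀ (x y : Fˣ) (h : (x : F) + (y : F) ≠ 0),
      min (v x) (v y) ≤ v (Units.mk0 ((x : F) + (y : F)) h)
  O : Subring F
  mem_O : ∀ x : F, x ∈ O ↔ ∀ h : x ≠ 0, 0 ≤ v (Units.mk0 x h)
  res : O →+* K
  res_surj : Function.Surjective res
  res_eq_zero : ∀ x : O, res x = 0 ↔ ∀ h : (x : F) ≠ 0, 1 ≤ v (Units.mk0 (x : F) h)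
  complete : ∀ f : ℕ → F,
      (∀ N : ℤ, ∃ M : ℕ, ∀ m, M ≤ m → ∀ n, M ≤ n → ∀ h : f m - f n ≠ 0,
        N ≤ v (Units.mk0 (f m - f n) h)) →
      ∃ a : F, ∀ N : ℤ, ∃ M : ℕ, ∀ n, M ≤ n → ∀ h : f n - a ≠ 0,
        N ≤ v (Units.mk0 (f n - a) h)
/-- The defining relations of mod 2 Milnor K-theory on the tensor algebra
`T(F^×)` (over `ℤ`, with `F^×` written additively): the Steinberg elements
`{a}·{1−a}` for `a ∈ F^× \ {1}` are set to `0`, and `2·1` is set to `0`.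
Quotienting by `MilnorRel` realizes the quotient by the two-sided ideal `J`
generated by these elements. -/
inductive MilnorRel (F : Type) [Field F] :
    TensorAlgebra ℤ (Additive Fˣ) → TensorAlgebra ℤ (Additive Fˣ) → Prop
  | steinberg (a : Fˣ) (h : (1 : F) - (a : F) ≠ 0) :
      MilnorRel F
        (TensorAlgebra.ι ℤ (Additive.ofMul a) *
          TensorAlgebra.ι ℤ (Additive.ofMul (Units.mk0 ((1 : F) - (a : F)) h))) 0
  | mod2 : MilnorRel F (2 : TensorAlgebra ℤ (Additive Fˣ)) 0

/-- Mod 2 Milnor K-theory `k^M(F) = T(F^×)/J`. -/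
abbrev MilnorK (F : Type) [Field F] := RingQuot (MilnorRel F)

/-- The degree-one class `{a}` of `a ∈ F^×` in mod 2 Milnor K-theory. -/
noncomputable def kcls {F : Type} [Field F] (a : Fˣ) : MilnorK F :=
  RingQuot.mkRingHom (MilnorRel F) (TensorAlgebra.ι ℤ (Additive.ofMul a))

namespace PadicData
variable {F K : Type} [Field F] [Field K] (D : PadicData F K)

/-- the valuation as a monoid hom to `Multiplicative ℤ`. -/
def vhom : Fˣ →* Multiplicative ℤ where
  toFun x := Multiplicative.ofAdd (D.v x)
  map_one' := by
    have h := D.v_mul 1 1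
    simp only [mul_one] at h
    have h1 : D.v 1 = 0 := by omega
    simp [h1]
  map_mul' x y := by simp [D.v_mul, ofAdd_add]

lemma v_one : D.v 1 = 0 := congrArg Multiplicative.toAdd D.vhom.map_one

lemma v_inv (x : Fˣ) : D.v x⁻¹ = - D.v x := by
  have := D.v_mul x x⁻¹
  simp [D.v_one] at this
  omega

lemma v_zpow (x : Fˣ) (n : ℤ) : D.v (x ^ n) = n * D.v x := by
  have := map_zpow D.vhom x n
  have h2 : Multiplicative.toAdd (D.vhom (x ^ n)) = Multiplicative.toAdd ((D.vhom x) ^ n) :=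
    congrArg _ this
  simpa [vhom] using h2

lemma v_neg_one : D.v (-1) = 0 := by
  have := D.v_mul (-1) (-1)
  simp at this
  rw [D.v_one] at this
  omega

lemma v_neg (x : Fˣ) : D.v (-x) = D.v x := by
  have : -x = -1 * x := by
    simp
  rw [this, D.v_mul, D.v_neg_one, zero_add]

/-- `x` has valuation at least `N` (with `0` counted as `∞`). -/
def vge (N : ℤ) (x : F) : Prop := ∀ h : x ≠ 0, N ≤ D.v (Units.mk0 x h)

lemma vge_zero (N : ℤ) : D.vge N 0 := fun h => absurd rfl h

lemma vge_mono {N M : ℤ} (h : N ≤ M) {x : F} (hx : D.vge M x) : D.vge N x :=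
  fun hx0 => le_trans h (hx hx0)

lemma vge_neg {N : ℤ} {x : F} (hx : D.vge N x) : D.vge N (-x) := by
  intro h
  have hx0 : x ≠ 0 := fun h0 => h (by simp [h0])
  have : Units.mk0 (-x) h = - Units.mk0 x hx0 := by ext; simp
  rw [this, D.v_neg]
  exact hx hx0

lemma vge_add {N : ℤ} {x y : F} (hx : D.vge N x) (hy : D.vge N y) : D.vge N (x + y) := by
  intro h
  by_cases hx0 : x = 0
  · subst hx0
    have : Units.mk0 (0 + y) h = Units.mk0 y (by simpa using h) := by ext; simp
    rw [this]; exact hy _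
  by_cases hy0 : y = 0
  · subst hy0
    have : Units.mk0 (x + 0) h = Units.mk0 x (by simpa using h) := by ext; simp
    rw [this]; exact hx _
  have := D.v_ultra (Units.mk0 x hx0) (Units.mk0 y hy0) (by simpa using h)
  simp only [Units.val_mk0] at this
  calc N ≤ min (D.v (Units.mk0 x hx0)) (D.v (Units.mk0 y hy0)) :=
        le_min (hx hx0) (hy hy0)
    _ ≤ _ := this
    
lemma vge_mul {N M : ℤ} {x y : F} (hx : D.vge N x) (hy : D.vge M y) :
    D.vge (N + M) (x * y) := by
  intro h
  have hx0 : x ≠ 0 := fun h0 => h (by simp [h0])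
  have hy0 : y ≠ 0 := fun h0 => h (by simp [h0])
  have : Units.mk0 (x * y) h = Units.mk0 x hx0 * Units.mk0 y hy0 := by ext; simp
  rw [this, D.v_mul]
  exact add_le_add (hx hx0) (hy hy0)

lemma eq_zero_of_forall_vge {x : F} (h : ∀ N : ℤ, D.vge N x) : x = 0 := by
  by_contra hx
  have := h (D.v (Units.mk0 x hx) + 1) hx
  omega

/-- being a nonzero element of valuation exactly zero. -/
def vz (x : F) : Prop := ∃ h : x ≠ 0, D.v (Units.mk0 x h) = 0

lemma vz_unit {x : Fˣ} (h : D.v x = 0) : D.vz (x : F) := by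
  refine ⟨x.ne_zero, ?_⟩
  have : Units.mk0 (x : F) x.ne_zero = x := by ext; simp
  rw [this]; exact h

lemma vz_mul {x y : F} (hx : D.vz x) (hy : D.vz y) : D.vz (x * y) := by
  obtain ⟨hx0, hxv⟩ := hx
  obtain ⟨hy0, hyv⟩ := hy
  refine ⟨mul_ne_zero hx0 hy0, ?_⟩
  have : Units.mk0 (x * y) (mul_ne_zero hx0 hy0) = Units.mk0 x hx0 * Units.mk0 y hy0 := by
    ext; simp
  rw [this, D.v_mul, hxv, hyv]
  norm_num

lemma vz_vge0 {x : F} (hx : D.vz x) : D.vge 0 x := by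
  obtain ⟨hx0, hxv⟩ := hx
  intro h
  rw [hxv.symm]

lemma vge_cancel {N : ℤ} {a b c : F} (habc : a * b = c) (hb : D.vz b) (hc : D.vge N c) :
    D.vge N a := by
  intro ha
  obtain ⟨hb0, hbv⟩ := hb
  have hc0 : c ≠ 0 := habc ▸ mul_ne_zero ha hb0
  have : Units.mk0 c hc0 = Units.mk0 a ha * Units.mk0 b hb0 := by ext; simp [← habc]
  have h2 := hc hc0
  rw [this, D.v_mul, hbv, add_zero] at h2
  exact h2

/-- ultrametric: adding something of strictly bigger valuation keeps `vz`. -/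
lemma vz_add_vge {x y : F} (hx : D.vz x) (hy : D.vge 1 y) : D.vz (x + y) := by
  obtain ⟨hx0, hxv⟩ := hx
  have hvzx : D.vz x := ⟨hx0, hxv⟩
  have hne : x + y ≠ 0 := by
    intro h0
    have hyx : y = -x := eq_neg_of_add_eq_zero_right h0
    rw [hyx] at hy
    have hne' : - -x ≠ 0 := by simpa using hx0
    have h2 := D.vge_neg hy hne'
    have he : Units.mk0 (- -x) hne' = Units.mk0 x hx0 := by ext; simp
    rw [he] at h2
    omega
  refine ⟨hne, ?_⟩
  have h0 : 0 ≤ D.v (Units.mk0 (x + y) hne) :=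
    D.vge_add (D.vz_vge0 hvzx) (D.vge_mono (by norm_num) hy) hne
  by_contra hgt
  have h1 : D.vge 1 (x + y) := by
    intro h
    have : Units.mk0 (x + y) h = Units.mk0 (x + y) hne := by ext; simp
    rw [this]; omega
  have hx1 : D.vge 1 x := by
    have : x = (x + y) + (-y) := by ring
    rw [this]
    exact D.vge_add h1 (D.vge_neg hy)
  have := hx1 hx0
  omega


/-! ### Residue helpers -/

open Classical in
/-- total residue map `F → K` (zero outside `O`). -/
noncomputable def rs (x : F) : K := if hx : x ∈ D.O then D.res ⟨x, hx⟩ else 0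

lemma mem_O_of_vge0 {x : F} (h : D.vge 0 x) : x ∈ D.O := (D.mem_O x).2 h

lemma rs_of_mem {x : F} (hx : x ∈ D.O) : D.rs x = D.res ⟨x, hx⟩ := by
  simp only [rs, dif_pos hx]

lemma rs_coe (e : D.O) : D.rs (e : F) = D.res e := by
  rw [D.rs_of_mem e.2]

lemma rs_one : D.rs 1 = 1 := by
  have : ((1 : D.O) : F) = 1 := rfl
  rw [← this, D.rs_coe, map_one]

lemma rs_mul {x y : F} (hx : x ∈ D.O) (hy : y ∈ D.O) : D.rs (x * y) = D.rs x * D.rs y := by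
  rw [D.rs_of_mem hx, D.rs_of_mem hy, D.rs_of_mem (mul_mem hx hy)]
  have : (⟨x * y, mul_mem hx hy⟩ : D.O) = ⟨x, hx⟩ * ⟨y, hy⟩ := rfl
  rw [this, map_mul]

lemma rs_eq_zero_iff {x : F} (hx : x ∈ D.O) : D.rs x = 0 ↔ D.vge 1 x := by
  rw [D.rs_of_mem hx]
  exact D.res_eq_zero ⟨x, hx⟩

lemma vz_of_rs_ne {x : F} (hx : x ∈ D.O) (h : D.rs x ≠ 0) : D.vz x := by
  have hx0 : x ≠ 0 := by
    intro h0
    apply h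
    rw [D.rs_of_mem hx]
    have : (⟨x, hx⟩ : D.O) = 0 := by ext; exact h0
    rw [this, map_zero]
  refine ⟨hx0, ?_⟩
  have h0 : 0 ≤ D.v (Units.mk0 x hx0) := (D.mem_O x).1 hx hx0
  have h1 : ¬ (1 ≤ D.v (Units.mk0 x hx0)) := by
    intro h1
    exact h ((D.rs_eq_zero_iff hx).2 (fun h' => by
      have : Units.mk0 x h' = Units.mk0 x hx0 := by ext; simp
      rw [this]; exact h1))
  omega

lemma rs_ne_zero_of_vz {x : F} (hx : D.vz x) : D.rs x ≠ 0 := by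
  obtain ⟨hx0, hxv⟩ := hx
  intro h
  have := (D.rs_eq_zero_iff (D.mem_O_of_vge0 (D.vz_vge0 ⟨hx0, hxv⟩))).1 h hx0
  omega

lemma vz_one : D.vz (1 : F) := ⟨one_ne_zero, by
  have : Units.mk0 (1 : F) one_ne_zero = 1 := by ext; simp
  rw [this, D.v_one]⟩

lemma mem_O_two : (2 : F) ∈ D.O := by
  apply D.mem_O_of_vge0
  have : (2 : F) = 1 + 1 := by norm_num
  rw [this]
  exact D.vge_add (D.vz_vge0 D.vz_one) (D.vz_vge0 D.vz_one)

lemma rs_two : D.rs (2 : F) = 2 := by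
  have h2 : (⟨(2:F), D.mem_O_two⟩ : D.O) = 2 := by ext; norm_cast
  rw [D.rs_of_mem D.mem_O_two, h2, map_ofNat]

lemma vz_two [Fintype K] (hodd : Odd (Fintype.card K)) (h2 : (2 : F) ≠ 0) : D.vz (2 : F) := by
  apply D.vz_of_rs_ne D.mem_O_two
  rw [D.rs_two]
  have hchar : ringChar K ≠ 2 := by
    intro hc
    have := FiniteField.even_card_iff_char_two.mp hc
    rw [Nat.odd_iff] at hodd
    omega
  exact Ring.two_ne_zero hchar

end PadicData

/-! ### Newton iteration -/

noncomputable def newton {F : Type} [Field F] (x c : F) : ℕ → F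
  | 0 => c
  | (k+1) => (newton x c k + x / newton x c k) / 2

namespace PadicData
variable {F K : Type} [Field F] [Field K] (D : PadicData F K)

lemma newton_invariant [Fintype K] (hodd : Odd (Fintype.card K)) (h2 : (2:F) ≠ 0)
    {x c : F} (hc : D.vz c) (h1 : D.vge 1 (c^2 - x)) (hxz : D.vz x) :
    ∀ k, D.vz (newton x c k) ∧ D.vge (k+1) ((newton x c k)^2 - x) := by
  intro k
  induction k with
  | zero => exact ⟨hc, h1⟩
  | succ k ih =>
    obtain ⟨hy, hky⟩ := ih
    set y := newton x c k with hydef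
    have hy0 : y ≠ 0 := hy.1
    have hvz2y : D.vz (2 * y) := D.vz_mul (D.vz_two hodd h2) hy
    have hstep : newton x c (k+1) = (y + x / y) / 2 := rfl
    have hid1 : (newton x c (k+1) - y) * (2 * y) = x - y^2 := by
      rw [hstep]; field_simp; ring
    have hd : D.vge (k+1) (newton x c (k+1) - y) :=
      D.vge_cancel hid1 hvz2y (by
        have : x - y^2 = -(y^2 - x) := by ring
        rw [this]; exact D.vge_neg hky)
    have hvzy' : D.vz (newton x c (k+1)) := by
      have : newton x c (k+1) = y + (newton x c (k+1) - y) := by ring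
      rw [this]
      exact D.vz_add_vge hy (D.vge_mono (by omega) hd)
    refine ⟨hvzy', ?_⟩
    have hid2 : ((newton x c (k+1))^2 - x) * ((2 * y) * (2 * y)) = (y^2 - x) * (y^2 - x) := by
      rw [hstep]; field_simp; ring
    have := D.vge_cancel hid2 (D.vz_mul hvz2y hvz2y) (D.vge_mul hky hky)
    exact D.vge_mono (by push_cast; omega) this

lemma exists_sqrt [Fintype K] (hodd : Odd (Fintype.card K)) (h2 : (2:F) ≠ 0)
    {x : Fˣ} (hx0 : D.v x = 0) (hsq : ∃ d : K, d * d = D.rs (x : F)) :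
    ∃ s : Fˣ, x = s * s := by
  obtain ⟨d, hd⟩ := hsq
  have hvzx : D.vz (x : F) := D.vz_unit hx0
  have hd0 : d ≠ 0 := by
    intro h0
    apply D.rs_ne_zero_of_vz hvzx
    rw [← hd, h0, mul_zero]
  obtain ⟨c0, hc0⟩ := D.res_surj d
  set c : F := (c0 : F) with hcdef
  have hvzc : D.vz c := by
    apply D.vz_of_rs_ne c0.2
    rw [D.rs_coe]
    rw [hc0]
    exact hd0
  have hxO : (x : F) ∈ D.O := D.mem_O_of_vge0 (D.vz_vge0 hvzx)
  have h1 : D.vge 1 (c^2 - (x:F)) := by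
    have hmem : c^2 - (x:F) ∈ D.O := by
      exact sub_mem (pow_mem c0.2 2) hxO
    rw [← D.rs_eq_zero_iff hmem]
    have e1 : c^2 - (x:F) = c * c - (x:F) := by ring
    have hmem2 : c * c ∈ D.O := mul_mem c0.2 c0.2
    have e2 : D.rs (c * c - (x:F)) = D.rs (c * c) - D.rs (x:F) := by
      rw [D.rs_of_mem (sub_mem hmem2 hxO), D.rs_of_mem hmem2, D.rs_of_mem hxO]
      have : (⟨c * c - (x:F), sub_mem hmem2 hxO⟩ : D.O) = ⟨c * c, hmem2⟩ - ⟨(x:F), hxO⟩ := rfl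
      rw [this, map_sub]
    rw [e1, e2, D.rs_mul c0.2 c0.2, D.rs_coe]
    rw [hc0, hd, sub_self]
  have hinv := D.newton_invariant hodd h2 hvzc h1 hvzx
  -- Cauchy
  have hcauchy : ∀ n m : ℕ, n ≤ m → D.vge ((n:ℤ)+1) (newton (x:F) c m - newton (x:F) c n) := by
    intro n m hnm
    induction m with
    | zero =>
      have : n = 0 := by omega
      subst this
      simpa using D.vge_zero 1
    | succ m ih =>
      rcases Nat.lt_or_ge n (m+1) with hlt | hge
      · have hnm' : n ≤ m := by omega
        have e : newton (x:F) c (m+1) - newton (x:F) c n =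
            (newton (x:F) c (m+1) - newton (x:F) c m) + (newton (x:F) c m - newton (x:F) c n) := by
          ring
        rw [e]
        apply D.vge_add
        · -- step difference has vge (m+1) ≥ n+1
          obtain ⟨hy, hky⟩ := hinv m
          have hy0 := hy.1
          have hid1 : (newton (x:F) c (m+1) - newton (x:F) c m) * (2 * newton (x:F) c m)
              = (x:F) - (newton (x:F) c m)^2 := by
            show ((newton (x:F) c m + (x:F) / newton (x:F) c m) / 2 - newton (x:F) c m) *
              (2 * newton (x:F) c m) = (x:F) - (newton (x:F) c m)^2
            field_simp; ring
          have hd1 := D.vge_cancel hid1 (D.vz_mul (D.vz_two hodd h2) hy) (by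
            have : (x:F) - (newton (x:F) c m)^2 = -((newton (x:F) c m)^2 - (x:F)) := by ring
            rw [this]; exact D.vge_neg hky)
          exact D.vge_mono (by push_cast; omega) hd1
        · exact ih hnm'
      · have : n = m + 1 := by omega
        subst this
        simpa using D.vge_zero ((m:ℤ)+1+1)
  -- completeness
  obtain ⟨a, ha⟩ := D.complete (newton (x:F) c) (by
    intro N
    refine ⟨N.toNat, ?_⟩
    intro m hm n hn h
    have key : D.vge N (newton (x:F) c m - newton (x:F) c n) := by
      rcases le_total n m with hle | hle
      · exact D.vge_mono (by omega) (hcauchy n m hle)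
      · have := D.vge_neg (hcauchy m n hle)
        have e : -(newton (x:F) c n - newton (x:F) c m) =
            newton (x:F) c m - newton (x:F) c n := by ring
        rw [e] at this
        exact D.vge_mono (by omega) this
    exact key h)
  -- a^2 = x
  have hax : a^2 = (x:F) := by
    have : a^2 - (x:F) = 0 := by
      apply D.eq_zero_of_forall_vge
      intro N
      rcases le_total N 0 with hN | hN
      · apply D.vge_mono hN
        -- vge 0 case: reuse general arg below with N = 0; just do generic
        obtain ⟨M, hM⟩ := ha 0
        set n := M
        have hfa : D.vge 0 (newton (x:F) c n - a) := fun h => hM n le_rfl h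
        have hfa' : D.vge 0 (a - newton (x:F) c n) := by
          have := D.vge_neg hfa
          have e : -(newton (x:F) c n - a) = a - newton (x:F) c n := by ring
          rwa [e] at this
        obtain ⟨hy, hky⟩ := hinv n
        have hsum : D.vge 0 (a + newton (x:F) c n) := by
          have e : a + newton (x:F) c n =
              (a - newton (x:F) c n) + 2 * newton (x:F) c n := by ring
          rw [e]
          exact D.vge_add hfa' (D.vz_vge0 (D.vz_mul (D.vz_two hodd h2) hy))
        have hprod : D.vge 0 ((a - newton (x:F) c n) * (a + newton (x:F) c n)) := by
          have := D.vge_mul hfa' hsum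
          simpa using this
        have e2 : a^2 - (x:F) = (a - newton (x:F) c n) * (a + newton (x:F) c n)
            + ((newton (x:F) c n)^2 - (x:F)) := by ring
        rw [e2]
        exact D.vge_add hprod (D.vge_mono (by omega) hky)
      · obtain ⟨M, hM⟩ := ha N
        set n := max M N.toNat with hndef
        have hfa : D.vge N (newton (x:F) c n - a) := fun h => hM n (le_max_left _ _) h
        have hfa' : D.vge N (a - newton (x:F) c n) := by
          have := D.vge_neg hfa
          have e : -(newton (x:F) c n - a) = a - newton (x:F) c n := by ring
          rwa [e] at this
        obtain ⟨hy, hky⟩ := hinv n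
        have hsum : D.vge 0 (a + newton (x:F) c n) := by
          have e : a + newton (x:F) c n =
              (a - newton (x:F) c n) + 2 * newton (x:F) c n := by ring
          rw [e]
          exact D.vge_add (D.vge_mono hN hfa') (D.vz_vge0 (D.vz_mul (D.vz_two hodd h2) hy))
        have hprod : D.vge N ((a - newton (x:F) c n) * (a + newton (x:F) c n)) := by
          have := D.vge_mul hfa' hsum
          simpa using this
        have e2 : a^2 - (x:F) = (a - newton (x:F) c n) * (a + newton (x:F) c n)
            + ((newton (x:F) c n)^2 - (x:F)) := by ring
        rw [e2]
        apply D.vge_add hprod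
        apply D.vge_mono _ hky
        have hn2 : N.toNat ≤ n := le_max_right _ _
        omega
    exact sub_eq_zero.mp this
  have ha0 : a ≠ 0 := by
    intro h0
    rw [h0] at hax
    exact x.ne_zero (by rw [← hax]; ring)
  refine ⟨Units.mk0 a ha0, ?_⟩
  ext
  rw [Units.val_mul, Units.val_mk0, ← hax]
  ring


/-! ### square-class sign in the residue field -/

open Classical in
noncomputable def sgn (x : K) : ZMod 2 := if IsSquare x then 0 else 1

variable (K) in
lemma char_ne_two [Fintype K] (hodd : Odd (Fintype.card K)) : ringChar K ≠ 2 := by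
  intro hc
  have := FiniteField.even_card_iff_char_two.mp hc
  rw [Nat.odd_iff] at hodd
  omega

lemma sgn_eq_zero_iff {x : K} : sgn x = 0 ↔ IsSquare x := by
  unfold sgn
  split
  · simpa
  · simp only [one_ne_zero, false_iff]; assumption

lemma sgn_mul [Fintype K] (hodd : Odd (Fintype.card K)) {x y : K} (hx : x ≠ 0) (hy : y ≠ 0) :
    sgn (x * y) = sgn x + sgn y := by
  classical
  have hchar := char_ne_two K hodd
  have hq := map_mul (quadraticChar K) x y
  have hxy : x * y ≠ 0 := mul_ne_zero hx hy
  by_cases hsx : IsSquare x <;> by_cases hsy : IsSquare y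
  · have h1 : quadraticChar K x = 1 := (quadraticChar_one_iff_isSquare hx).2 hsx
    have h2 : quadraticChar K y = 1 := (quadraticChar_one_iff_isSquare hy).2 hsy
    have : IsSquare (x * y) := by
      apply (quadraticChar_one_iff_isSquare hxy).1
      rw [hq, h1, h2]; norm_num
    unfold sgn
    rw [if_pos this, if_pos hsx, if_pos hsy]; norm_num
  · have h1 : quadraticChar K x = 1 := (quadraticChar_one_iff_isSquare hx).2 hsx
    have h2 : quadraticChar K y = -1 := quadraticChar_neg_one_iff_not_isSquare.2 hsy
    have : ¬ IsSquare (x * y) := by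
      apply quadraticChar_neg_one_iff_not_isSquare.1
      rw [hq, h1, h2]; norm_num
    unfold sgn
    rw [if_neg this, if_pos hsx, if_neg hsy]; norm_num
  · have h1 : quadraticChar K x = -1 := quadraticChar_neg_one_iff_not_isSquare.2 hsx
    have h2 : quadraticChar K y = 1 := (quadraticChar_one_iff_isSquare hy).2 hsy
    have : ¬ IsSquare (x * y) := by
      apply quadraticChar_neg_one_iff_not_isSquare.1
      rw [hq, h1, h2]; norm_num
    unfold sgn
    rw [if_neg this, if_neg hsx, if_pos hsy]; norm_num
  · have h1 : quadraticChar K x = -1 := quadraticChar_neg_one_iff_not_isSquare.2 hsx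
    have h2 : quadraticChar K y = -1 := quadraticChar_neg_one_iff_not_isSquare.2 hsy
    have : IsSquare (x * y) := by
      apply (quadraticChar_one_iff_isSquare hxy).1
      rw [hq, h1, h2]; norm_num
    unfold sgn
    rw [if_pos this, if_neg hsx, if_neg hsy]; decide

/-! ### the invariants `ν` and `ε` -/

def nu (a : Fˣ) : ZMod 2 := (D.v a : ZMod 2)

noncomputable def up (π : Fˣ) (a : Fˣ) : Fˣ := a * π ^ (-(D.v a))

noncomputable def eps (π : Fˣ) (a : Fˣ) : ZMod 2 := sgn (D.rs ((D.up π a : Fˣ) : F))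

variable {π : Fˣ}

lemma v_up (hπ : D.v π = 1) (a : Fˣ) : D.v (D.up π a) = 0 := by
  rw [up, D.v_mul, D.v_zpow, hπ]
  ring

lemma vz_up (hπ : D.v π = 1) (a : Fˣ) : D.vz ((D.up π a : Fˣ) : F) :=
  D.vz_unit (D.v_up hπ a)

lemma up_mem (hπ : D.v π = 1) (a : Fˣ) : ((D.up π a : Fˣ) : F) ∈ D.O :=
  D.mem_O_of_vge0 (D.vz_vge0 (D.vz_up hπ a))

lemma rs_up_ne (hπ : D.v π = 1) (a : Fˣ) : D.rs ((D.up π a : Fˣ) : F) ≠ 0 :=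
  D.rs_ne_zero_of_vz (D.vz_up hπ a)

lemma nu_mul (a b : Fˣ) : D.nu (a * b) = D.nu a + D.nu b := by
  rw [nu, D.v_mul]
  push_cast
  rfl

lemma nu_neg_one : D.nu (-1) = 0 := by
  rw [nu, D.v_neg_one]
  rfl

lemma up_mul (a b : Fˣ) : D.up π (a * b) = D.up π a * D.up π b := by
  rw [up, up, up, D.v_mul, neg_add]
  rw [zpow_add]
  exact mul_mul_mul_comm a b _ _

lemma eps_mul [Fintype K] (hodd : Odd (Fintype.card K)) (hπ : D.v π = 1) (a b : Fˣ) :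
    D.eps π (a * b) = D.eps π a + D.eps π b := by
  rw [eps, eps, eps, up_mul, Units.val_mul,
    D.rs_mul (D.up_mem hπ a) (D.up_mem hπ b),
    sgn_mul hodd (D.rs_up_ne hπ a) (D.rs_up_ne hπ b)]

lemma up_of_v_eq_zero {a : Fˣ} (ha : D.v a = 0) : D.up π a = a := by
  rw [up, ha, neg_zero, zpow_zero, mul_one]

lemma eps_of_square_res {a : Fˣ} (ha : D.v a = 0) (h : IsSquare (D.rs (a : F))) :
    D.eps π a = 0 := by
  rw [eps, D.up_of_v_eq_zero ha]
  exact sgn_eq_zero_iff.2 h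

lemma eps_pi (hπ : D.v π = 1) : D.eps π π = 0 := by
  rw [eps]
  have : D.up π π = 1 := by
    rw [up, hπ]
    simp
  rw [this, Units.val_one, D.rs_one]
  exact sgn_eq_zero_iff.2 IsSquare.one

lemma v_eq_zero_of_vz_coe {b : Fˣ} (h : D.vz (b : F)) : D.v b = 0 := by
  obtain ⟨h0, hv⟩ := h
  have : Units.mk0 (b : F) h0 = b := by ext; simp
  rw [this] at hv
  exact hv

lemma rs_sub {x y : F} (hx : x ∈ D.O) (hy : y ∈ D.O) : D.rs (x - y) = D.rs x - D.rs y := by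
  rw [D.rs_of_mem (sub_mem hx hy), D.rs_of_mem hx, D.rs_of_mem hy]
  have : (⟨x - y, sub_mem hx hy⟩ : D.O) = ⟨x, hx⟩ - ⟨y, hy⟩ := rfl
  rw [this, map_sub]

lemma rs_one_sub_of_vge1 {y : F} (hy : D.vge 1 y) : D.rs (1 - y) = 1 := by
  have hyO : y ∈ D.O := D.mem_O_of_vge0 (D.vge_mono (by norm_num) hy)
  rw [D.rs_sub (one_mem _) hyO, D.rs_one, (D.rs_eq_zero_iff hyO).2 hy, sub_zero]

/-- the main Steinberg-symbol computation for `ε`/`ν`. -/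
lemma steinberg_eps [Fintype K] (hodd : Odd (Fintype.card K)) (hπ : D.v π = 1)
    (a : Fˣ) (h : (1 : F) - (a : F) ≠ 0) :
    D.nu a * D.eps π (Units.mk0 ((1:F) - (a:F)) h)
      + D.nu (Units.mk0 ((1:F) - (a:F)) h) * D.eps π a
      + D.eps π (-1) * (D.nu a * D.nu (Units.mk0 ((1:F) - (a:F)) h)) = 0 := by
  set b : Fˣ := Units.mk0 ((1:F) - (a:F)) h with hbdef
  have hbval : (b : F) = 1 - (a : F) := rfl
  have hvz_neg_a : ∀ (x : Fˣ), D.vge (D.v x) (-(x : F)) := by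
    intro x
    intro hne
    have : Units.mk0 (-(x:F)) hne = -x := by ext; simp
    rw [this, D.v_neg]
  rcases lt_trichotomy (D.v a) 0 with hn | hn | hn
  · -- negative valuation case
    have ha1 : (a : F) ≠ 1 := by
      intro he
      apply h
      rw [he, sub_self]
    have hvainv : D.v a⁻¹ ≥ 1 := by rw [D.v_inv]; omega
    have hw0 : (1 : F) - ((a⁻¹ : Fˣ) : F) ≠ 0 := by
      intro he
      apply ha1
      have h1 : ((a⁻¹ : Fˣ) : F) = 1 := (sub_eq_zero.mp he).symm
      have h2 : ((a : F))⁻¹ = 1 := by rw [← h1]; simp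
      field_simp at h2
      exact h2.symm
    set w : Fˣ := Units.mk0 ((1:F) - ((a⁻¹ : Fˣ) : F)) hw0 with hwdef
    have hvge1 : D.vge 1 (-((a⁻¹ : Fˣ) : F)) := by
      intro hne
      have : Units.mk0 (-((a⁻¹:Fˣ):F)) hne = -(a⁻¹) := by ext; simp
      rw [this, D.v_neg]
      omega
    have hvzw : D.vz ((w : F)) := by
      rw [hwdef]
      have : (1:F) - ((a⁻¹:Fˣ):F) = 1 + (-((a⁻¹:Fˣ):F)) := by ring
      simp only [Units.val_mk0, this]
      exact D.vz_add_vge D.vz_one hvge1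
    have hvw : D.v w = 0 := D.v_eq_zero_of_vz_coe hvzw
    have hwval : (w : F) = 1 - ((a⁻¹:Fˣ):F) := rfl
    have hrsw : D.rs (w : F) = 1 := by
      rw [hwval]
      apply D.rs_one_sub_of_vge1
      intro hne
      have : Units.mk0 ((a⁻¹:Fˣ):F) hne = a⁻¹ := by ext; simp
      rw [this]; omega
    have hepsw : D.eps π w = 0 := D.eps_of_square_res hvw (hrsw ▸ IsSquare.one)
    have hnuw : D.nu w = 0 := by rw [nu, hvw]; rfl
    have hbfac : b = (-1) * a * w := by
      ext
      rw [Units.val_mul, Units.val_mul, hbval, hwval]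
      have hainv : ((a⁻¹ : Fˣ) : F) = ((a : F))⁻¹ := by simp
      rw [hainv]
      have ha0 : (a : F) ≠ 0 := a.ne_zero
      field_simp
      simp only [Units.val_neg, Units.val_one]
      ring
    have hepsb : D.eps π b = D.eps π (-1) + D.eps π a := by
      rw [hbfac, eps_mul D hodd hπ, eps_mul D hodd hπ, hepsw, add_zero]
    have hnub : D.nu b = D.nu a := by
      rw [hbfac, nu_mul, nu_mul, hnuw, add_zero, D.nu_neg_one, zero_add]
    rw [hepsb, hnub]
    have key : ∀ x y z : ZMod 2, x * (z + y) + x * y + z * (x * x) = 0 := by decide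
    exact key (D.nu a) (D.eps π a) (D.eps π (-1))
  · -- valuation zero case
    have hnua : D.nu a = 0 := by rw [nu, hn]; rfl
    have hvgeb : D.vge 0 ((b : F)) := by
      rw [hbval]
      have : (1:F) - (a:F) = 1 + (-(a:F)) := by ring
      rw [this]
      apply D.vge_add (D.vz_vge0 D.vz_one)
      have := hvz_neg_a a
      rw [hn] at this
      exact this
    have hvb : 0 ≤ D.v b := by
      have := hvgeb b.ne_zero
      have he : Units.mk0 ((b:F)) b.ne_zero = b := by ext; simp
      rw [he] at this
      exact this
    rcases eq_or_lt_of_le hvb with hvb0 | hvb1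
    · have hnub : D.nu b = 0 := by rw [nu, ← hvb0]; rfl
      rw [hnua, hnub]
      ring
    · -- v b ≥ 1, so a = 1 - b has residue 1
      have hvgeb1 : D.vge 1 ((b : F)) := by
        intro hne
        have he : Units.mk0 ((b:F)) hne = b := by ext; simp
        rw [he]
        omega
      have hrsa : D.rs ((a : F)) = 1 := by
        have : (a : F) = 1 - (b : F) := by rw [hbval]; ring
        rw [this]
        exact D.rs_one_sub_of_vge1 hvgeb1
      have hepsa : D.eps π a = 0 := D.eps_of_square_res hn (hrsa ▸ IsSquare.one)
      rw [hnua, hepsa]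
      ring
  · -- positive valuation case: v b = 0
    have hvge1a : D.vge 1 ((a : F)) := by
      intro hne
      have he : Units.mk0 ((a:F)) hne = a := by ext; simp
      rw [he]; omega
    have hvzb : D.vz ((b : F)) := by
      rw [hbval]
      have : (1:F) - (a:F) = 1 + (-(a:F)) := by ring
      rw [this]
      apply D.vz_add_vge D.vz_one
      exact D.vge_neg hvge1a
    have hvb : D.v b = 0 := D.v_eq_zero_of_vz_coe hvzb
    have hnub : D.nu b = 0 := by rw [nu, hvb]; rfl
    have hrsb : D.rs ((b : F)) = 1 := by
      rw [hbval]
      exact D.rs_one_sub_of_vge1 hvge1a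
    have hepsb : D.eps π b = 0 := D.eps_of_square_res hvb (hrsb ▸ IsSquare.one)
    rw [hnub, hepsb]
    ring

end PadicData

/-! ### a truncated graded ring detecting degree-2 symbols -/

@[ext]
structure Tgr (m : ZMod 2) where
  c : ZMod 2
  e : ZMod 2
  n : ZMod 2
  d : ZMod 2

namespace Tgr
variable {m : ZMod 2}

instance : Zero (Tgr m) := ⟨⟨0,0,0,0⟩⟩
instance : One (Tgr m) := ⟨⟨1,0,0,0⟩⟩
instance : Add (Tgr m) := ⟨fun x y => ⟨x.c + y.c, x.e + y.e, x.n + y.n, x.d + y.d⟩⟩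
instance : Neg (Tgr m) := ⟨fun x => ⟨-x.c, -x.e, -x.n, -x.d⟩⟩
instance : Mul (Tgr m) := ⟨fun x y =>
  ⟨x.c * y.c, x.c * y.e + y.c * x.e, x.c * y.n + y.c * x.n,
    x.c * y.d + y.c * x.d + x.n * y.e + y.n * x.e + m * (x.n * y.n)⟩⟩

@[simp] lemma add_def (x y : Tgr m) :
    x + y = ⟨x.c + y.c, x.e + y.e, x.n + y.n, x.d + y.d⟩ := rfl
@[simp] lemma mul_def (x y : Tgr m) :
    x * y = ⟨x.c * y.c, x.c * y.e + y.c * x.e, x.c * y.n + y.c * x.n,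
      x.c * y.d + y.c * x.d + x.n * y.e + y.n * x.e + m * (x.n * y.n)⟩ := rfl
@[simp] lemma zero_def : (0 : Tgr m) = ⟨0,0,0,0⟩ := rfl
@[simp] lemma one_def : (1 : Tgr m) = ⟨1,0,0,0⟩ := rfl
@[simp] lemma neg_def (x : Tgr m) : -x = ⟨-x.c, -x.e, -x.n, -x.d⟩ := rfl

instance : AddCommGroup (Tgr m) where
  add_assoc := by intros a b c; ext <;> simp <;> ring
  zero_add := by intros a; ext <;> simp
  add_zero := by intros a; ext <;> simp
  add_comm := by intros a b; ext <;> simp <;> ring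
  neg_add_cancel := by intros a; ext <;> simp <;> exact (by decide : ∀ x : ZMod 2, x + x = 0) _
  nsmul := nsmulRec
  zsmul := zsmulRec

set_option maxHeartbeats 1000000 in
instance : Ring (Tgr m) where
  __ := (inferInstance : AddCommGroup (Tgr m))
  mul_assoc := by intros a b c; ext <;> simp <;> ring
  one_mul := by intros a; ext <;> simp
  mul_one := by intros a; ext <;> simp
  left_distrib := by intros a b c; ext <;> simp <;> ring
  right_distrib := by intros a b c; ext <;> simp <;> ring
  zero_mul := by intros a; ext <;> simp
  mul_zero := by intros a; ext <;> simp

lemma two_eq_zero : (2 : Tgr m) = 0 := by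
  have : (2 : Tgr m) = 1 + 1 := one_add_one_eq_two.symm
  rw [this]
  ext <;> simp <;> decide

end Tgr

/-! ### generic mod-2 Milnor K-theory lemmas -/

section MilnorLemmas
variable {F : Type} [Field F]

lemma kcls_mul (a b : Fˣ) : kcls (a * b) = kcls a + kcls b := by
  unfold kcls
  rw [← map_add]
  congr 1
  rw [← map_add]
  rfl

lemma kcls_one : kcls (1 : Fˣ) = (0 : MilnorK F) := by
  unfold kcls
  have : (Additive.ofMul (1 : Fˣ)) = 0 := rfl
  rw [this, map_zero, map_zero]

lemma MilnorK.two_eq_zero : (2 : MilnorK F) = 0 := by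
  have h := RingQuot.mkRingHom_rel (MilnorRel.mod2 (F := F))
  rw [map_zero] at h
  rw [← map_ofNat (RingQuot.mkRingHom (MilnorRel F)) 2]
  exact h

lemma MilnorK.add_self (z : MilnorK F) : z + z = 0 := by
  have : z + z = (2 : MilnorK F) * z := (two_mul z).symm
  rw [this, MilnorK.two_eq_zero, zero_mul]

lemma MilnorK.neg_eq (z : MilnorK F) : -z = z := by
  rw [neg_eq_iff_add_eq_zero]
  exact MilnorK.add_self z

lemma kcls_steinberg (a : Fˣ) (h : (1 : F) - (a : F) ≠ 0) :
    kcls a * kcls (Units.mk0 ((1:F) - (a:F)) h) = 0 := by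
  unfold kcls
  rw [← map_mul]
  have h2 := RingQuot.mkRingHom_rel (MilnorRel.steinberg a h)
  rw [map_zero] at h2
  exact h2

lemma kcls_sum_one {a b : Fˣ} (hab : (a : F) + (b : F) = 1) :
    kcls a * kcls b = 0 := by
  have h : (1 : F) - (a : F) ≠ 0 := by
    rw [← hab]; simpa using b.ne_zero
  have : b = Units.mk0 ((1:F) - (a:F)) h := by
    ext
    rw [Units.val_mk0, ← hab]
    ring
  rw [this]
  exact kcls_steinberg a h

lemma kcls_inv (a : Fˣ) : kcls a⁻¹ = kcls a := by
  have h := kcls_mul a a⁻¹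
  rw [mul_inv_cancel, kcls_one] at h
  have h' : kcls a⁻¹ + kcls a = 0 := by rw [add_comm]; exact h.symm
  have h2 : kcls a⁻¹ = -kcls a := eq_neg_of_add_eq_zero_left h'
  rw [h2, MilnorK.neg_eq]

lemma kcls_neg_self (a : Fˣ) : kcls a * kcls (-a) = 0 := by
  by_cases h1 : a = 1
  · subst h1
    rw [kcls_one, zero_mul]
  · have ha1 : (a : F) ≠ 1 := fun he => h1 (Units.ext he)
    have h : (1 : F) - (a : F) ≠ 0 := sub_ne_zero.mpr (Ne.symm ha1)
    have hainv1 : ((a⁻¹ : Fˣ) : F) ≠ 1 := by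
      intro he
      apply h1
      have : a⁻¹ = 1 := Units.ext (by rw [he]; rfl)
      rw [← inv_inv a, this, inv_one]
    have hinv : (1 : F) - ((a⁻¹ : Fˣ) : F) ≠ 0 := sub_ne_zero.mpr (Ne.symm hainv1)
    have hfac : -a = (Units.mk0 ((1:F) - (a:F)) h) * (Units.mk0 ((1:F) - ((a⁻¹:Fˣ):F)) hinv)⁻¹ := by
      ext
      rw [Units.val_mul, Units.val_inv_eq_inv_val, Units.val_mk0, Units.val_mk0, Units.val_neg]
      have hainv : ((a⁻¹ : Fˣ) : F) = ((a : F))⁻¹ := by simp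
      rw [hainv]
      have ha0 : (a : F) ≠ 0 := a.ne_zero
      rw [hainv] at hinv
      rw [eq_mul_inv_iff_mul_eq₀ hinv]
      field_simp
      ring
    rw [hfac, kcls_mul, kcls_inv, mul_add, kcls_steinberg a h, zero_add]
    rw [← kcls_inv a]
    exact kcls_steinberg a⁻¹ (by
      have hainv : ((a⁻¹ : Fˣ) : F) = ((a : F))⁻¹ := by simp
      rw [hainv] at hinv ⊢
      exact hinv)

lemma kcls_neg_decomp (a : Fˣ) : kcls (-a) = kcls (-1) + kcls a := by
  have : -a = (-1) * a := by simp
  rw [this, kcls_mul]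

lemma kcls_self_eq (a : Fˣ) : kcls a * kcls a = kcls a * kcls (-1) := by
  have h := kcls_neg_self a
  rw [kcls_neg_decomp, mul_add] at h
  have h' : kcls a * kcls a + kcls a * kcls (-1) = 0 := by rw [add_comm]; exact h
  have h2 : kcls a * kcls a = -(kcls a * kcls (-1)) := eq_neg_of_add_eq_zero_left h'
  rw [h2, MilnorK.neg_eq]

lemma kcls_mul_comm (a b : Fˣ) : kcls a * kcls b = kcls b * kcls a := by
  have hab := kcls_neg_self (a * b)
  rw [kcls_neg_decomp, kcls_mul] at hab
  have expand : (kcls a + kcls b) * (kcls (-1) + (kcls a + kcls b)) =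
      (kcls a * kcls (-1) + kcls a * kcls a) + ((kcls b * kcls (-1) + kcls b * kcls b)
        + (kcls a * kcls b + kcls b * kcls a)) := by noncomm_ring
  rw [expand, kcls_self_eq a, kcls_self_eq b, MilnorK.add_self, MilnorK.add_self,
    zero_add, zero_add] at hab
  have h2 : kcls a * kcls b = -(kcls b * kcls a) := eq_neg_of_add_eq_zero_left hab
  rw [h2, MilnorK.neg_eq]

lemma kcls_sq (s b : Fˣ) : kcls (s * s * b) = kcls b := by
  rw [kcls_mul, kcls_mul, MilnorK.add_self, zero_add]

end MilnorLemmas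

/-! ### the symbol homomorphism to `Tgr` -/

namespace PadicData
variable {F K : Type} [Field F] [Field K] (D : PadicData F K) {π : Fˣ}

lemma eps_one : D.eps π (1 : Fˣ) = 0 :=
  D.eps_of_square_res D.v_one (by rw [Units.val_one, D.rs_one]; exact IsSquare.one)

lemma nu_one : D.nu (1 : Fˣ) = 0 := by rw [nu, D.v_one]; rfl

noncomputable def genmap [Fintype K] (hodd : Odd (Fintype.card K)) (hπ : D.v π = 1) :
    Additive Fˣ →+ Tgr (D.eps π (-1)) where
  toFun a := ⟨0, D.eps π (Additive.toMul a), D.nu (Additive.toMul a), 0⟩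
  map_zero' := by
    show (⟨0, D.eps π (1 : Fˣ), D.nu (1 : Fˣ), 0⟩ : Tgr (D.eps π (-1))) = 0
    rw [D.eps_one, D.nu_one]
    rfl
  map_add' a b := by
    show (⟨0, D.eps π (Additive.toMul a * Additive.toMul b),
        D.nu (Additive.toMul a * Additive.toMul b), 0⟩ : Tgr (D.eps π (-1))) = _
    rw [D.eps_mul hodd hπ, D.nu_mul]
    ext <;> simp

noncomputable def phi [Fintype K] (hodd : Odd (Fintype.card K)) (hπ : D.v π = 1) :
    MilnorK F →+* Tgr (D.eps π (-1)) :=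
  RingQuot.lift ⟨((TensorAlgebra.lift ℤ ((D.genmap hodd hπ).toIntLinearMap)) :
      TensorAlgebra ℤ (Additive Fˣ) →ₐ[ℤ] Tgr (D.eps π (-1))).toRingHom, by
    intro x y hrel
    induction hrel with
    | steinberg a h =>
      rw [map_mul, map_zero]
      have hι : ∀ z : Additive Fˣ,
          ((TensorAlgebra.lift ℤ ((D.genmap hodd hπ).toIntLinearMap)) :
            TensorAlgebra ℤ (Additive Fˣ) →ₐ[ℤ] Tgr (D.eps π (-1))).toRingHom
            (TensorAlgebra.ι ℤ z) = D.genmap hodd hπ z := fun z => by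
        simp [TensorAlgebra.lift_ι_apply]
      rw [hι, hι]
      show (⟨0, D.eps π a, D.nu a, 0⟩ : Tgr (D.eps π (-1))) *
        ⟨0, D.eps π (Units.mk0 ((1:F) - (a:F)) h), D.nu (Units.mk0 ((1:F) - (a:F)) h), 0⟩ = 0
      have hst := D.steinberg_eps hodd hπ a h
      ext <;> simp <;> linear_combination hst
    | mod2 =>
      rw [map_zero, map_ofNat]
      exact Tgr.two_eq_zero⟩

lemma phi_kcls [Fintype K] (hodd : Odd (Fintype.card K)) (hπ : D.v π = 1) (a : Fˣ) :
    D.phi hodd hπ (kcls a) = ⟨0, D.eps π a, D.nu a, 0⟩ := by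
  unfold phi kcls
  rw [RingQuot.lift_mkRingHom_apply]
  simp [TensorAlgebra.lift_ι_apply]
  rfl

lemma symbol_ne_zero [Fintype K] (hodd : Odd (Fintype.card K)) (hπ : D.v π = 1)
    {u : Fˣ} (hu0 : D.v u = 0) (hεu : D.eps π u = 1) :
    kcls u * kcls π ≠ (0 : MilnorK F) := by
  intro h0
  have hφ := congrArg (D.phi hodd hπ) h0
  rw [map_mul, map_zero, D.phi_kcls hodd hπ, D.phi_kcls hodd hπ] at hφ
  have hnu : D.nu u = 0 := by rw [nu, hu0]; rfl
  have hnπ : D.nu π = 1 := by rw [nu, hπ]; rfl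
  have hd := congrArg Tgr.d hφ
  simp [hεu, D.eps_pi hπ, hnu, hnπ] at hd

end PadicData

/-! ### square classes and products -/

namespace PadicData
variable {F K : Type} [Field F] [Field K] (D : PadicData F K) [Fintype K] {π u : Fˣ}

lemma not_square_rs_u (humem : (u:F) ∈ D.O)
    (hu : ¬ ∃ b : K, b * b = D.res ⟨(u:F), humem⟩) :
    ¬ IsSquare (D.rs (u : F)) := by
  rintro ⟨r, hr⟩
  exact hu ⟨r, by rw [← D.rs_of_mem humem, hr]⟩

lemma eps_u_eq_one (hu0 : D.v u = 0) (hns : ¬IsSquare (D.rs (u:F))) : D.eps π u = 1 := by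
  rw [eps, D.up_of_v_eq_zero hu0]
  unfold sgn
  rw [if_neg hns]

lemma unit_square_class (hodd : Odd (Fintype.card K)) (h2F : (2:F) ≠ 0) (hu0 : D.v u = 0)
    (hns : ¬IsSquare (D.rs (u:F))) {w : Fˣ} (hw : D.v w = 0) :
    (∃ s : Fˣ, w = s * s) ∨ (∃ s : Fˣ, w = u * (s * s)) := by
  by_cases hsq : IsSquare (D.rs (w : F))
  · left
    obtain ⟨d, hd⟩ := hsq
    exact D.exists_sqrt hodd h2F hw ⟨d, hd.symm⟩
  · right
    have hvuinv : D.v u⁻¹ = 0 := by rw [D.v_inv, hu0]; ring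
    have hW : D.v (w * u⁻¹) = 0 := by rw [D.v_mul, hw, hvuinv]; ring
    have hmw : (w:F) ∈ D.O := D.mem_O_of_vge0 (D.vz_vge0 (D.vz_unit hw))
    have hmu : (u:F) ∈ D.O := D.mem_O_of_vge0 (D.vz_vge0 (D.vz_unit hu0))
    have hmui : ((u⁻¹:Fˣ):F) ∈ D.O := D.mem_O_of_vge0 (D.vz_vge0 (D.vz_unit hvuinv))
    have hprod : D.rs ((u:F)) * D.rs (((u⁻¹:Fˣ):F)) = 1 := by
      rw [← D.rs_mul hmu hmui]
      have he : (u:F) * ((u⁻¹:Fˣ):F) = 1 := by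
        rw [← Units.val_mul, mul_inv_cancel, Units.val_one]
      rw [he, D.rs_one]
    have hru : D.rs (u:F) ≠ 0 := D.rs_ne_zero_of_vz (D.vz_unit hu0)
    have hrui : D.rs (((u⁻¹:Fˣ):F)) ≠ 0 := by
      intro h
      rw [h, mul_zero] at hprod
      simp at hprod
    have hrw : D.rs (w:F) ≠ 0 := D.rs_ne_zero_of_vz (D.vz_unit hw)
    have h1 : sgn (D.rs (u:F)) + sgn (D.rs (((u⁻¹:Fˣ):F))) = 0 := by
      rw [← sgn_mul hodd hru hrui, hprod]
      exact sgn_eq_zero_iff.2 IsSquare.one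
    have h2 : sgn (D.rs (((u⁻¹:Fˣ):F))) = 1 := by
      have hsu : sgn (D.rs (u:F)) = 1 := by unfold sgn; rw [if_neg hns]
      rw [hsu] at h1
      have hdec : ∀ x : ZMod 2, 1 + x = 0 → x = 1 := by decide
      exact hdec _ h1
    have hWsq : IsSquare (D.rs (((w * u⁻¹ : Fˣ) : F))) := by
      rw [← sgn_eq_zero_iff, Units.val_mul, D.rs_mul hmw hmui, sgn_mul hodd hrw hrui]
      have hsw : sgn (D.rs (w:F)) = 1 := by unfold sgn; rw [if_neg hsq]
      rw [hsw, h2]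
      decide
    obtain ⟨d, hd⟩ := hWsq
    obtain ⟨s, hs⟩ := D.exists_sqrt hodd h2F hW ⟨d, hd.symm⟩
    refine ⟨s, ?_⟩
    rw [← hs, mul_comm w u⁻¹, ← mul_assoc, mul_inv_cancel, one_mul]

lemma ku_ku (hodd : Odd (Fintype.card K)) (h2F : (2:F) ≠ 0) (hu0 : D.v u = 0)
    (humem : (u:F) ∈ D.O) (hu : ¬ ∃ b : K, b * b = D.res ⟨(u:F), humem⟩) :
    kcls u * kcls u = (0 : MilnorK F) := by
  classical
  have hns := D.not_square_rs_u humem hu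
  have hune : D.rs (u:F) ≠ 0 := D.rs_ne_zero_of_vz (D.vz_unit hu0)
  set uK := D.rs (u:F) with huK
  have hcard : Fintype.card K % 2 = 1 := Nat.odd_iff.mp hodd
  have hdegf : (Polynomial.C uK * Polynomial.X ^ 2 : Polynomial K).degree = 2 :=
    Polynomial.degree_C_mul_X_pow 2 hune
  have hdegg : (Polynomial.C uK * Polynomial.X ^ 2 - 1 : Polynomial K).degree = 2 := by
    have h0 : (0 : WithBot ℕ) < 2 := by decide
    have := Polynomial.degree_sub_C (p := Polynomial.C uK * Polynomial.X ^ 2) (a := (1 : K))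
      (by rw [hdegf]; exact h0)
    rw [hdegf] at this
    rw [← this, Polynomial.C_1]
  obtain ⟨aK, bK, hab⟩ := FiniteField.exists_root_sum_quadratic hdegf hdegg hcard
  simp only [Polynomial.eval_sub, Polynomial.eval_mul, Polynomial.eval_one,
    Polynomial.eval_pow, Polynomial.eval_C, Polynomial.eval_X] at hab
  -- hab : uK * aK^2 + (uK * bK^2 - 1) = 0
  have haK : aK ≠ 0 := by
    intro h0
    rw [h0] at hab
    have hb0 : bK ≠ 0 := by
      intro h1
      rw [h1] at hab
      simp at hab
    apply hns
    have hinv : uK * (bK * bK) = 1 := by linear_combination hab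
    refine ⟨bK⁻¹, ?_⟩
    field_simp
    linear_combination hinv
  have hbK : bK ≠ 0 := by
    intro h0
    rw [h0] at hab
    apply hns
    have hinv : uK * (aK * aK) = 1 := by linear_combination hab
    refine ⟨aK⁻¹, ?_⟩
    field_simp
    linear_combination hinv
  -- lift aK
  obtain ⟨x0, hx0⟩ := D.res_surj aK
  have hrsx0 : D.rs ((x0 : F)) = aK := by rw [D.rs_coe, hx0]
  have hvzx0 : D.vz ((x0 : F)) := D.vz_of_rs_ne x0.2 (by rw [hrsx0]; exact haK)
  obtain ⟨hx0ne, hvx0⟩ := hvzx0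
  set X : Fˣ := Units.mk0 (x0 : F) hx0ne with hXdef
  have hvX : D.v X = 0 := hvx0
  have hXval : (X : F) = (x0 : F) := rfl
  set A : Fˣ := u * (X * X) with hAdef
  have hvA : D.v A = 0 := by rw [D.v_mul, D.v_mul, hu0, hvX]; ring
  have hmA : (A : F) ∈ D.O := D.mem_O_of_vge0 (D.vz_vge0 (D.vz_unit hvA))
  have hmX : (X : F) ∈ D.O := D.mem_O_of_vge0 (D.vz_vge0 (D.vz_unit hvX))
  have hmu : (u:F) ∈ D.O := humem
  have hrsA : D.rs (A : F) = uK * (aK * aK) := by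
    have hAv : (A : F) = (u : F) * ((X:F) * (X:F)) := by
      rw [hAdef, Units.val_mul, Units.val_mul]
    have hrsX : D.rs ((X:F)) = aK := hrsx0
    rw [hAv, D.rs_mul hmu (mul_mem hmX hmX), D.rs_mul hmX hmX, hrsX]
  set t : F := 1 - (A : F) with htdef
  have hmt : t ∈ D.O := sub_mem (one_mem _) hmA
  have hrst : D.rs t = uK * (bK * bK) := by
    rw [htdef, D.rs_sub (one_mem _) hmA, D.rs_one, hrsA]
    linear_combination -hab
  have hrstne : D.rs t ≠ 0 := by
    rw [hrst]
    exact mul_ne_zero hune (mul_ne_zero hbK hbK)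
  have hvzt : D.vz t := D.vz_of_rs_ne hmt hrstne
  obtain ⟨htne, hvt⟩ := hvzt
  set T : Fˣ := Units.mk0 t htne with hTdef
  have hvT : D.v T = 0 := hvt
  have hvuinv : D.v u⁻¹ = 0 := by rw [D.v_inv, hu0]; ring
  have hvW : D.v (T * u⁻¹) = 0 := by rw [D.v_mul, hvT, hvuinv]; ring
  have hmui : ((u⁻¹:Fˣ):F) ∈ D.O := D.mem_O_of_vge0 (D.vz_vge0 (D.vz_unit hvuinv))
  have hmT : (T:F) ∈ D.O := D.mem_O_of_vge0 (D.vz_vge0 (D.vz_unit hvT))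
  have hprod : D.rs ((u:F)) * D.rs (((u⁻¹:Fˣ):F)) = 1 := by
    rw [← D.rs_mul hmu hmui]
    have he : (u:F) * ((u⁻¹:Fˣ):F) = 1 := by
      rw [← Units.val_mul, mul_inv_cancel, Units.val_one]
    rw [he, D.rs_one]
  have hsqW : ∃ d : K, d * d = D.rs (((T * u⁻¹ : Fˣ) : F)) := by
    refine ⟨bK, ?_⟩
    have he : ((T * u⁻¹ : Fˣ) : F) = (T:F) * ((u⁻¹:Fˣ):F) := Units.val_mul _ _
    rw [he, D.rs_mul hmT hmui]
    have hrsT : D.rs ((T:F)) = uK * (bK * bK) := hrst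
    rw [hrsT]
    -- bK * bK = uK * (bK*bK) * rs(u⁻¹);  use hprod
    have hcalc : uK * (bK * bK) * D.rs (((u⁻¹:Fˣ):F))
        = (bK * bK) * (uK * D.rs (((u⁻¹:Fˣ):F))) := by ring
    rw [hcalc, hprod, mul_one]
  obtain ⟨s, hs⟩ := D.exists_sqrt hodd h2F hvW hsqW
  -- T = u * (s * s)
  have hT : T = u * (s * s) := by
    rw [← hs, mul_comm T u⁻¹, ← mul_assoc, mul_inv_cancel, one_mul]
  -- Steinberg: A + T = 1 in F
  have hsum : (A : F) + ((u * (s * s) : Fˣ) : F) = 1 := by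
    rw [← hT]
    have : (T : F) = t := rfl
    rw [this, htdef]
    ring
  have hst := kcls_sum_one hsum
  have hkA : kcls A = kcls u := by
    rw [hAdef, kcls_mul, kcls_mul, MilnorK.add_self, add_zero]
  have hkB : kcls (u * (s * s)) = kcls u := by
    rw [kcls_mul, kcls_mul, MilnorK.add_self, add_zero]
  rw [hkA, hkB] at hst
  exact hst

end PadicData

/-! ### final assembly -/

namespace PadicData
variable {F K : Type} [Field F] [Field K] (D : PadicData F K) [Fintype K] {π u : Fˣ}

lemma kcls_cases (hodd : Odd (Fintype.card K)) (h2F : (2:F) ≠ 0) (hπ : D.v π = 1)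
    (hu0 : D.v u = 0) (hns : ¬IsSquare (D.rs (u:F))) (a : Fˣ) :
    kcls a = (0:MilnorK F) ∨ kcls a = kcls u ∨ kcls a = kcls π ∨
      kcls a = kcls u + kcls π := by
  set n := D.v a with hn
  set w := D.up π a with hw
  have hvw : D.v w = 0 := D.v_up hπ a
  have haw : a = w * π ^ n := by
    rw [hw, up, mul_assoc, ← zpow_add, neg_add_cancel, zpow_zero, mul_one]
  obtain ⟨m, j, hj, hnj⟩ : ∃ m j : ℤ, (j = 0 ∨ j = 1) ∧ n = m + m + j :=
    ⟨n / 2, n % 2, by omega, by omega⟩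
  have hka : kcls a = kcls w + kcls (π ^ j) := by
    rw [haw, hnj, zpow_add, zpow_add, kcls_mul, kcls_mul, kcls_mul,
      MilnorK.add_self, zero_add]
  have hkw : kcls w = 0 ∨ kcls w = kcls u := by
    rcases D.unit_square_class hodd h2F hu0 hns hvw with ⟨s, hs⟩ | ⟨s, hs⟩
    · left; rw [hs, kcls_mul, MilnorK.add_self]
    · right; rw [hs, kcls_mul, kcls_mul, MilnorK.add_self, add_zero]
  have hkj : kcls (π ^ j) = 0 ∨ kcls (π ^ j) = kcls π := by
    rcases hj with rfl | rfl
    · left; rw [zpow_zero, kcls_one]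
    · right; rw [zpow_one]
  rcases hkw with h1 | h1 <;> rcases hkj with h2 | h2
  · left; rw [hka, h1, h2, add_zero]
  · right; right; left; rw [hka, h1, h2, zero_add]
  · right; left; rw [hka, h1, h2, add_zero]
  · right; right; right; rw [hka, h1, h2]

lemma kpipi (hodd : Odd (Fintype.card K)) (h2F : (2:F) ≠ 0) (hπ : D.v π = 1)
    (hu0 : D.v u = 0) (hns : ¬IsSquare (D.rs (u:F))) :
    kcls π * kcls π = (0 : MilnorK F) ∨ kcls π * kcls π = kcls u * kcls π := by
  have hm1 : D.v (-1 : Fˣ) = 0 := D.v_neg_one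
  rcases D.unit_square_class hodd h2F hu0 hns hm1 with ⟨s, hs⟩ | ⟨s, hs⟩
  · left
    have h0 : kcls (-1 : Fˣ) = 0 := by rw [hs, kcls_mul, MilnorK.add_self]
    rw [kcls_self_eq, h0, mul_zero]
  · right
    have h0 : kcls (-1 : Fˣ) = kcls u := by
      rw [hs, kcls_mul, kcls_mul, MilnorK.add_self, add_zero]
    rw [kcls_self_eq, h0, kcls_mul_comm]

end PadicData


/-- every product `{a}·{b}` equals `0` or `{u}·{π}`; with `{u}·{π} ≠ 0`,
the second Milnor K-group (the additive group generated by such products) has exactly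
two elements. -/
theorem milnor_deg_two {F K : Type} [Field F] [CharZero F] [Field K] [Fintype K]
    (D : PadicData F K) (hodd : Odd (Fintype.card K))
    (π : Fˣ) (hπ : D.v π = 1)
    (u : Fˣ) (hu0 : D.v u = 0) (humem : (u : F) ∈ D.O)
    (hu : ¬ ∃ b : K, b * b = D.res ⟨(u : F), humem⟩) :
    (∀ a b : Fˣ, kcls a * kcls b = 0 ∨ kcls a * kcls b = kcls u * kcls π) ∧
    kcls u * kcls π ≠ 0 ∧
    {z : MilnorK F | ∃ a b : Fˣ, z = kcls a * kcls b} = {0, kcls u * kcls π} ∧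
    Nat.card (AddSubgroup.closure {z : MilnorK F | ∃ a b : Fˣ, z = kcls a * kcls b}) = 2 := by
  have h2F : (2 : F) ≠ 0 := two_ne_zero
  have hns : ¬IsSquare (D.rs (u:F)) := D.not_square_rs_u humem hu
  have hεu : D.eps π u = 1 := D.eps_u_eq_one hu0 hns
  have hT : kcls u * kcls π ≠ (0 : MilnorK F) := D.symbol_ne_zero hodd hπ hu0 hεu
  have huu : kcls u * kcls u = (0 : MilnorK F) := D.ku_ku hodd h2F hu0 humem hu
  have hpp := D.kpipi hodd h2F hπ hu0 hns
  have hcases := D.kcls_cases hodd h2F hπ hu0 hns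
  have part1 : ∀ a b : Fˣ, kcls a * kcls b = 0 ∨ kcls a * kcls b = kcls u * kcls π := by
    intro a b
    rcases hcases a with ha | ha | ha | ha <;> rcases hcases b with hb | hb | hb | hb <;>
      rw [ha, hb]
    · left; rw [zero_mul]
    · left; rw [zero_mul]
    · left; rw [zero_mul]
    · left; rw [zero_mul]
    · left; rw [mul_zero]
    · left; exact huu
    · right; rfl
    · right; rw [mul_add, huu, zero_add]
    · left; rw [mul_zero]
    · right; exact kcls_mul_comm π u
    · exact hpp
    · rcases hpp with hp | hp
      · right; rw [mul_add, kcls_mul_comm π u, hp, add_zero]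
      · left; rw [mul_add, kcls_mul_comm π u, hp, MilnorK.add_self]
    · left; rw [mul_zero]
    · right; rw [add_mul, huu, zero_add, kcls_mul_comm π u]
    · rcases hpp with hp | hp
      · right; rw [add_mul, hp, add_zero]
      · left; rw [add_mul, hp, MilnorK.add_self]
    · rcases hpp with hp | hp
      · left
        rw [add_mul, mul_add, mul_add, huu, hp, kcls_mul_comm π u, zero_add, add_zero,
          MilnorK.add_self]
      · right
        rw [add_mul, mul_add, mul_add, huu, hp, kcls_mul_comm π u, zero_add,
          MilnorK.add_self, add_zero]
  have part3 : {z : MilnorK F | ∃ a b : Fˣ, z = kcls a * kcls b}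
      = {0, kcls u * kcls π} := by
    ext z
    constructor
    · rintro ⟨a, b, rfl⟩
      rcases part1 a b with h | h
      · exact Or.inl h
      · exact Or.inr h
    · rintro (rfl | rfl)
      · exact ⟨1, 1, by rw [kcls_one, zero_mul]⟩
      · exact ⟨u, π, rfl⟩
  refine ⟨part1, hT, part3, ?_⟩
  rw [part3]
  set T := kcls u * kcls π with hTdef
  let G : AddSubgroup (MilnorK F) :=
    { carrier := {0, T}
      zero_mem' := Or.inl rfl
      add_mem' := by
        rintro x y (rfl | hx) (rfl | hy)
        · left; rw [add_zero]
        · rw [Set.mem_singleton_iff] at hy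
          subst hy
          right; rw [zero_add]; rfl
        · rw [Set.mem_singleton_iff] at hx
          subst hx
          right; rw [add_zero]; rfl
        · rw [Set.mem_singleton_iff] at hx hy
          subst hx; subst hy
          left; exact MilnorK.add_self T
      neg_mem' := by
        rintro x (rfl | hx)
        · left; rw [neg_zero]
        · rw [Set.mem_singleton_iff] at hx
          subst hx
          right
          rw [MilnorK.neg_eq]
          rfl }
  have hG : AddSubgroup.closure ({0, T} : Set (MilnorK F)) = G := by
    apply le_antisymm
    · exact (AddSubgroup.closure_le G).2 (by exact fun x hx => hx)
    · intro x hx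
      exact AddSubgroup.subset_closure hx
  rw [hG]
  have hcard : Nat.card G = ({0, T} : Set (MilnorK F)).ncard := by
    rw [← Nat.card_coe_set_eq]
    rfl
  rw [hcard]
  exact Set.ncard_pair (Ne.symm hT)
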